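/- Fix j ∈ {1, ..., m} and τ ∈ [0,1]. For all real numbers λ_j, ..., λ_m with λ_ℓ ≥ 0 for each ℓ and Σ_{ℓ=j}^{m} λ_ℓ ≤ τ, one has Σ_{ℓ=j}^{m} r⁽ℓ⁾·B⁽ℓ⁾·(1 − e^{−λ_ℓ}) ≤ Σ_{ℓ=j}^{m} r⁽ℓ⁾·B⁽ℓ⁾·(1 − exp(−α⁽ℓ⁾ + (A⁽ʲ⁾ − τ)/(m − j + 1))). Moreover, if α⁽ℓ⁾ ≥ (A⁽ʲ⁾ − τ)/(m − j + 1) for every ℓ ∈ {j, ..., m}, the bound is attained by λ_ℓ = α⁽ℓ⁾ − (A⁽ʲ⁾ − τ)/(m − j + 1). -/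

import Mathlib

lemma stmt_13_aux (K a lam c : ℝ) (hK : 0 < K) :
    K * Real.exp a * (1 - Real.exp (-lam)) ≤
    K * Real.exp a * (1 - Real.exp (-a + c)) + K * Real.exp c * (lam - (a - c)) := by
  have h := Real.add_one_le_exp (a - lam - c)
  have e1 : Real.exp (a - lam - c) * Real.exp c = Real.exp a * Real.exp (-lam) := by
    rw [← Real.exp_add, ← Real.exp_add]; ring_nf
  have e2 : Real.exp (-a + c) * Real.exp a = Real.exp c := by
    rw [← Real.exp_add]; ring_nf
  nlinarith [Real.exp_pos c, Real.exp_pos a,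
    mul_le_mul_of_nonneg_right h (le_of_lt (Real.exp_pos c))]

/-- Lemma 4. -/
theorem stmt_13 (m : ℕ) (hm : 1 ≤ m) (r : ℕ → ℝ) (hr0 : r 0 = 0)
    (hr : ∀ j, j < m → r j < r (j + 1))
    (α : ℕ → ℝ)
    (hαpos : ∀ j ∈ Finset.Icc 1 m, 0 < α j)
    (hαsum : (∑ j ∈ Finset.Icc 1 m, α j) = 1)
    (hαeq : ∀ j ∈ Finset.Icc 2 m,
      1 - Real.exp (-(α j)) = (1 - r (j - 1) / r j) * (1 - Real.exp (-(α 1))))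
    (B : ℕ → ℝ) (hB1 : B 1 = 1)
    (hB : ∀ j ∈ Finset.Icc 1 m,
      r j * B j * Real.exp (-(α j)) = r 1 * Real.exp (-(α 1)))
    (j : ℕ) (hj : j ∈ Finset.Icc 1 m) (τ : ℝ) (hτ : τ ∈ Set.Icc (0 : ℝ) 1)
    (A : ℝ) (hA : A = ∑ ℓ ∈ Finset.Icc j m, α ℓ) :
    (∀ lam : ℕ → ℝ, (∀ ℓ ∈ Finset.Icc j m, 0 ≤ lam ℓ) →
      (∑ ℓ ∈ Finset.Icc j m, lam ℓ) ≤ τ →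
      (∑ ℓ ∈ Finset.Icc j m, r ℓ * B ℓ * (1 - Real.exp (-(lam ℓ)))) ≤
        ∑ ℓ ∈ Finset.Icc j m,
          r ℓ * B ℓ * (1 - Real.exp (-(α ℓ) + (A - τ) / ((m : ℝ) - j + 1)))) ∧
    ((∀ ℓ ∈ Finset.Icc j m, (A - τ) / ((m : ℝ) - j + 1) ≤ α ℓ) →
      (∀ ℓ ∈ Finset.Icc j m, 0 ≤ α ℓ - (A - τ) / ((m : ℝ) - j + 1)) ∧
      (∑ ℓ ∈ Finset.Icc j m, (α ℓ - (A - τ) / ((m : ℝ) - j + 1))) ≤ τ ∧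
      (∑ ℓ ∈ Finset.Icc j m,
          r ℓ * B ℓ * (1 - Real.exp (-(α ℓ - (A - τ) / ((m : ℝ) - j + 1))))) =
        ∑ ℓ ∈ Finset.Icc j m,
          r ℓ * B ℓ * (1 - Real.exp (-(α ℓ) + (A - τ) / ((m : ℝ) - j + 1)))) := by
  obtain ⟨hj1, hjm⟩ := Finset.mem_Icc.mp hj
  set c : ℝ := (A - τ) / ((m : ℝ) - j + 1) with hc
  have hjmR : (j : ℝ) ≤ m := by exact_mod_cast hjm
  have hden : (0 : ℝ) < (m : ℝ) - j + 1 := by linarith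
  have hcard : ((Finset.Icc j m).card : ℝ) = (m : ℝ) - j + 1 := by
    rw [Nat.card_Icc]
    have : j ≤ m + 1 := by omega
    push_cast [Nat.cast_sub this]
    ring
  have hsumstar : (∑ ℓ ∈ Finset.Icc j m, (α ℓ - c)) = τ := by
    rw [Finset.sum_sub_distrib, Finset.sum_const, nsmul_eq_mul, hcard, ← hA, hc]
    field_simp
    ring
  -- the constant K
  set K : ℝ := r 1 * Real.exp (-(α 1)) with hKdef
  have hr1 : 0 < r 1 := by
    have := hr 0 (by omega)
    rw [hr0] at this; simpa using this
  have hK : 0 < K := mul_pos hr1 (Real.exp_pos _)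
  have hw : ∀ ℓ ∈ Finset.Icc j m, r ℓ * B ℓ = K * Real.exp (α ℓ) := by
    intro ℓ hℓ
    obtain ⟨h1, h2⟩ := Finset.mem_Icc.mp hℓ
    have hℓ' : ℓ ∈ Finset.Icc 1 m := Finset.mem_Icc.mpr ⟨by omega, h2⟩
    have h := hB ℓ hℓ'
    have key : r ℓ * B ℓ = (r ℓ * B ℓ * Real.exp (-(α ℓ))) * Real.exp (α ℓ) := by
      rw [mul_assoc, ← Real.exp_add]; simp
    rw [key, h]
  constructor
  · intro lam hlam hsum
    calc (∑ ℓ ∈ Finset.Icc j m, r ℓ * B ℓ * (1 - Real.exp (-(lam ℓ))))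
        ≤ ∑ ℓ ∈ Finset.Icc j m,
            (r ℓ * B ℓ * (1 - Real.exp (-(α ℓ) + c))
              + K * Real.exp c * (lam ℓ - (α ℓ - c))) := by
          apply Finset.sum_le_sum
          intro ℓ hℓ
          rw [hw ℓ hℓ]
          exact stmt_13_aux K (α ℓ) (lam ℓ) c hK
      _ = (∑ ℓ ∈ Finset.Icc j m, r ℓ * B ℓ * (1 - Real.exp (-(α ℓ) + c)))
            + K * Real.exp c *
              ((∑ ℓ ∈ Finset.Icc j m, lam ℓ) - ∑ ℓ ∈ Finset.Icc j m, (α ℓ - c)) := by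
          rw [Finset.sum_add_distrib, ← Finset.mul_sum, Finset.sum_sub_distrib]
      _ ≤ ∑ ℓ ∈ Finset.Icc j m, r ℓ * B ℓ * (1 - Real.exp (-(α ℓ) + c)) := by
          rw [hsumstar]
          have h1 : (∑ ℓ ∈ Finset.Icc j m, lam ℓ) - τ ≤ 0 := by linarith
          nlinarith [Real.exp_pos c, mul_pos hK (Real.exp_pos c)]
  · intro hge
    refine ⟨fun ℓ hℓ => by linarith [hge ℓ hℓ], hsumstar.le, ?_⟩
    apply Finset.sum_congr rfl
    intro ℓ hℓ
    congr 2
    ring
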